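/- arXiv:2103.16459 — 2 statements merged into one kernel-verified Lean document; each statement's English description precedes it below -/
import Mathlib

section
/- With R and m(u) = ρ̄₂^(γ-1) - uZ - u²/2 as above (γ > 1, ρ̄₂, Z > 0), on any interval where m(u) > 0 one has (γ-1) R'(u) m(u)^((γ-2)/(γ-1)) = ((γ+1)/2)(u+Z)² - ((γ-1)/2)Z² - (γ-1)ρ̄₂^(γ-1); in particular this expression is a strictly monotone (increasing) function of u on [0,∞). -/
open Real

/-- Identity for the derivative of the Rankine–Hugoniot function, and strict
monotonicity of the resulting expression on `[0, ∞)`. -/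
theorem RH_deriv_identity_and_monotone (γ ρ2 Z : ℝ)
    (hγ : 1 < γ) (hρ2 : 0 < ρ2) (hZ : 0 < Z)
    (m R : ℝ → ℝ)
    (hm : ∀ u, m u = ρ2 ^ (γ - 1) - u * Z - u ^ 2 / 2)
    (hR : ∀ u, R u = ρ2 * Z - m u ^ (1 / (γ - 1)) * (u + Z)) :
    (∀ u, 0 < m u →
      (γ - 1) * deriv R u * m u ^ ((γ - 2) / (γ - 1)) =
        (γ + 1) / 2 * (u + Z) ^ 2 - (γ - 1) / 2 * Z ^ 2 - (γ - 1) * ρ2 ^ (γ - 1)) ∧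
    StrictMonoOn
      (fun u => (γ + 1) / 2 * (u + Z) ^ 2 - (γ - 1) / 2 * Z ^ 2 - (γ - 1) * ρ2 ^ (γ - 1))
      (Set.Ici 0) := by
  have hγ1 : γ - 1 ≠ 0 := by nlinarith
  have hmfun : m = fun u => ρ2 ^ (γ - 1) - u * Z - u ^ 2 / 2 := funext hm
  have hRfun : R = fun u => ρ2 * Z - m u ^ (1 / (γ - 1)) * (u + Z) := funext hR
  constructor
  · intro u hmu
    have hmderiv : HasDerivAt m (-(Z + u)) u := by
      rw [hmfun]
      have h1 : HasDerivAt (fun u : ℝ => u * Z) Z u := by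
        simpa using (hasDerivAt_id u).mul_const Z
      have h2 : HasDerivAt (fun u : ℝ => u ^ 2 / 2) u u := by
        simpa using (hasDerivAt_pow 2 u).div_const 2
      have := ((hasDerivAt_const u (ρ2 ^ (γ - 1))).sub h1).sub h2
      exact this.congr_deriv (by ring)
    have hF : HasDerivAt (fun u => m u ^ (1 / (γ - 1)))
        (-(Z + u) * (1 / (γ - 1)) * m u ^ (1 / (γ - 1) - 1)) u :=
      hmderiv.rpow_const (Or.inl hmu.ne')
    have hG : HasDerivAt (fun u => m u ^ (1 / (γ - 1)) * (u + Z))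
        (-(Z + u) * (1 / (γ - 1)) * m u ^ (1 / (γ - 1) - 1) * (u + Z)
          + m u ^ (1 / (γ - 1)) * 1) u :=
      hF.mul ((hasDerivAt_id u).add_const Z)
    have hRd : HasDerivAt R
        (0 - (-(Z + u) * (1 / (γ - 1)) * m u ^ (1 / (γ - 1) - 1) * (u + Z)
          + m u ^ (1 / (γ - 1)) * 1)) u := by
      rw [hRfun]
      exact (hasDerivAt_const u (ρ2 * Z)).sub hG
    rw [hRd.deriv]
    set A := m u ^ (1 / (γ - 1) - 1) with hA
    set B := m u ^ (1 / (γ - 1)) with hB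
    set C := m u ^ ((γ - 2) / (γ - 1)) with hC
    have hAC : A * C = 1 := by
      rw [hA, hC, ← Real.rpow_add hmu]
      have : 1 / (γ - 1) - 1 + (γ - 2) / (γ - 1) = 0 := by field_simp; ring
      rw [this, Real.rpow_zero]
    have hBC : B * C = m u := by
      rw [hB, hC, ← Real.rpow_add hmu]
      have : 1 / (γ - 1) + (γ - 2) / (γ - 1) = 1 := by field_simp; ring
      rw [this, Real.rpow_one]
    have key : (γ - 1) * (0 - (-(Z + u) * (1 / (γ - 1)) * A * (u + Z) + B * 1)) * C
        = (u + Z) ^ 2 * (A * C) - (γ - 1) * (B * C) := by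
      field_simp
      ring
    rw [key, hAC, hBC, hm u]
    ring
  · intro a ha b hb hab
    simp only [Set.mem_Ici] at ha hb
    have h1 : (0 : ℝ) < a + b + 2 * Z := by nlinarith
    have := mul_pos (sub_pos.2 hab) h1
    simp only
    nlinarith
end

section
/- For σ, δ ∈ ℝ with σ + δ ∉ {0, π} (mod π) and real numbers a₁₁, a₁₂, a₂₂ with a₁₁ > 0, a₂₂ > 0 and a₁₂² < a₁₁a₂₂, the determinant of the matrix with rows (sin(σ+δ), cos(σ+δ), 0), (sin(σ+δ)cos(σ+δ), cos²(σ+δ) − sin²(σ+δ), −sin(σ+δ)cos(σ+δ)), (a₁₁, 2a₁₂, a₂₂) equals −sin(σ+δ)·(a₁₁cos²(σ+δ) − 2a₁₂ sin(σ+δ)cos(σ+δ) + a₂₂ sin²(σ+δ)), which is nonzero when sin(σ+δ) ≠ 0. -/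
open Real

/-- Determinant identity from the proof that `u` has no extremum on the interior
of the wedge boundary; the determinant is nonzero when `sin(σ+δ) ≠ 0`. -/
theorem wedge_boundary_determinant (σ δ a11 a12 a22 : ℝ)
    (h11 : 0 < a11) (h22 : 0 < a22) (h12 : a12 ^ 2 < a11 * a22)
    (M : Matrix (Fin 3) (Fin 3) ℝ)
    (hM : M = !![Real.sin (σ + δ), Real.cos (σ + δ), 0;
        Real.sin (σ + δ) * Real.cos (σ + δ),
          Real.cos (σ + δ) ^ 2 - Real.sin (σ + δ) ^ 2,
          -(Real.sin (σ + δ) * Real.cos (σ + δ));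
        a11, 2 * a12, a22]) :
    M.det = -(Real.sin (σ + δ) *
        (a11 * Real.cos (σ + δ) ^ 2 - 2 * a12 * Real.sin (σ + δ) * Real.cos (σ + δ)
          + a22 * Real.sin (σ + δ) ^ 2)) ∧
    (Real.sin (σ + δ) ≠ 0 → M.det ≠ 0) := by
  set s := Real.sin (σ + δ)
  set c := Real.cos (σ + δ)
  have hsc : s ^ 2 + c ^ 2 = 1 := Real.sin_sq_add_cos_sq _
  have hdet : M.det = -(s * (a11 * c ^ 2 - 2 * a12 * s * c + a22 * s ^ 2)) := by
    rw [hM, Matrix.det_fin_three]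
    simp [Matrix.cons_val_zero, Matrix.cons_val_one]
    ring
  refine ⟨hdet, fun hs => ?_⟩
  rw [hdet]
  have hs2 : 0 < s ^ 2 := by positivity
  have hq : 0 < a11 * c ^ 2 - 2 * a12 * s * c + a22 * s ^ 2 := by
    nlinarith [sq_nonneg (a11 * c - a12 * s), sq_nonneg s, sq_nonneg c,
      mul_pos h11 h22, sq_nonneg a12, hs2]
  intro h
  have := mul_ne_zero hs (ne_of_gt hq)
  exact this (by linarith [neg_eq_zero.mp h])
end
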